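/- Let R₁ and R₂ be commutative rings, φ : R₁ → R₂ a surjective ring homomorphism, n ≥ 1, and fix a monomial order on n-variable polynomials. Let Γ be a strong Gröbner basis of an ideal I of R₁[x₁,...,xₙ], and suppose that for every g ∈ Γ the image φ(lc(g)) of its leading coefficient is neither 0 nor a zero divisor in R₂. Then for every nonzero h in the image ideal φ(I) there exists f ∈ I such that φ(f) = h and f has the same leading term as h (i.e. the leading exponent vector of f equals that of h). -/

import Mathlib

open MvPolynomial

variable {R : Type*} [CommRing R] {σ : Type*}

/-- The leading exponent vector (leading term) of a polynomial with respect to a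
monomial order: the largest exponent vector with nonzero coefficient. -/
noncomputable def mDegree (m : MonomialOrder σ) (f : MvPolynomial σ R) : σ →₀ ℕ :=
  m.toSyn.symm (f.support.sup fun d => m.toSyn d)

/-- The leading coefficient of a polynomial with respect to a monomial order. -/
noncomputable def mLeadingCoeff (m : MonomialOrder σ) (f : MvPolynomial σ R) : R :=
  f.coeff (mDegree m f)

/-- `Γ ⊆ I \ {0}` is a strong Gröbner basis of `I` when, for every nonzero `f ∈ I`,
some `g ∈ Γ` has leading monomial `lm(g) = lc(g)·lt(g)` dividing `lm(f)`, i.e. the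
leading coefficient of `g` divides that of `f` and the leading exponent vector of `g`
is componentwise `≤` that of `f`. -/
def IsStrongGroebnerBasis (m : MonomialOrder σ) (I : Ideal (MvPolynomial σ R))
    (Γ : Set (MvPolynomial σ R)) : Prop :=
  Γ ⊆ (I : Set (MvPolynomial σ R)) \ {0} ∧
    ∀ f ∈ I, f ≠ 0 → ∃ g ∈ Γ,
      mLeadingCoeff m g ∣ mLeadingCoeff m f ∧ mDegree m g ≤ mDegree m f

section Aux


variable (m : MonomialOrder σ)

lemma toSyn_mDegree (f : MvPolynomial σ R) :
    m.toSyn (mDegree m f) = f.support.sup fun d => m.toSyn d := by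
  simp [mDegree]

lemma le_mDegree {f : MvPolynomial σ R} {d : σ →₀ ℕ} (hd : d ∈ f.support) :
    m.toSyn d ≤ m.toSyn (mDegree m f) := by
  rw [toSyn_mDegree]; exact Finset.le_sup hd

lemma coeff_eq_zero_of_lt {f : MvPolynomial σ R} {d : σ →₀ ℕ}
    (hd : m.toSyn (mDegree m f) < m.toSyn d) : f.coeff d = 0 := by
  by_contra hc
  exact absurd (le_mDegree m (mem_support_iff.mpr hc)) (not_le.mpr hd)

lemma mLeadingCoeff_ne_zero {f : MvPolynomial σ R} (hf : f ≠ 0) :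
    mLeadingCoeff m f ≠ 0 := by
  obtain ⟨d, hd, hsup⟩ := Finset.exists_mem_eq_sup f.support
    (support_nonempty.mpr hf) (fun d => m.toSyn d)
  have hdeg : mDegree m f = d := by
    rw [mDegree, hsup]; exact m.toSyn.symm_apply_apply d
  rw [mLeadingCoeff, hdeg]; exact mem_support_iff.mp hd

lemma mDegree_lt_of {f' f : MvPolynomial σ R} (hne : f' ≠ 0)
    (hall : ∀ d, m.toSyn (mDegree m f) ≤ m.toSyn d → f'.coeff d = 0) :
    m.toSyn (mDegree m f') < m.toSyn (mDegree m f) := by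
  by_contra hlt
  exact mLeadingCoeff_ne_zero m hne (hall _ (not_lt.mp hlt))

end Aux

/-- Statement in the proof of Proposition 2: under the same hypotheses, every nonzero
`h` in the image ideal `φ(I)` lifts to some `f ∈ I` with `φ(f) = h` having the same
leading term (leading exponent vector) as `h`. -/

theorem exists_lift_same_leading_term
    {R₁ R₂ : Type*} [CommRing R₁] [CommRing R₂]
    (φ : R₁ →+* R₂) (hφ : Function.Surjective φ)
    (n : ℕ) (hn : 1 ≤ n) (m : MonomialOrder (Fin n))
    (I : Ideal (MvPolynomial (Fin n) R₁)) (Γ : Set (MvPolynomial (Fin n) R₁))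
    (hΓ : IsStrongGroebnerBasis m I Γ)
    (hlc : ∀ g ∈ Γ, φ (mLeadingCoeff m g) ≠ 0 ∧
      φ (mLeadingCoeff m g) ∈ nonZeroDivisors R₂) :
    ∀ h ∈ Ideal.map (MvPolynomial.map φ) I, h ≠ 0 →
      ∃ f ∈ I, MvPolynomial.map φ f = h ∧ mDegree m f = mDegree m h := by
  intro h hh hh0
  suffices key : ∀ s : m.syn, ∀ f : MvPolynomial (Fin n) R₁,
      m.toSyn (mDegree m f) = s → f ∈ I → MvPolynomial.map φ f = h →
      ∃ f' ∈ I, MvPolynomial.map φ f' = h ∧ mDegree m f' = mDegree m h by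
    obtain ⟨f₀, hf₀I, hf₀⟩ := (Ideal.mem_map_iff_of_surjective _
      (MvPolynomial.map_surjective φ hφ)).mp hh
    exact key _ f₀ rfl hf₀I hf₀
  intro s
  induction s using WellFoundedLT.induction with
  | _ s IH =>
    intro f hs hfI hmap
    have hf0 : f ≠ 0 := by rintro rfl; exact hh0 (by simpa using hmap.symm)
    by_cases hφlc : φ (mLeadingCoeff m f) = 0
    · -- leading coefficient dies; subtract a multiple of a basis element
      obtain ⟨g, hgΓ, ⟨c, hc⟩, hdeg⟩ := hΓ.2 f hfI hf0
      have hg0 : g ∈ I := (hΓ.1 hgΓ).1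
      have hφc : φ c = 0 := by
        have h1 : φ c * φ (mLeadingCoeff m g) = 0 := by
          rw [mul_comm, ← map_mul, ← hc, hφlc]
        exact (hlc g hgΓ).2.2 _ h1
      set e : Fin n →₀ ℕ := mDegree m f - mDegree m g with he_def
      have he : e + mDegree m g = mDegree m f := tsub_add_cancel_of_le hdeg
      set f' : MvPolynomial (Fin n) R₁ := f - MvPolynomial.monomial e c * g with hf'_def
      have hf'I : f' ∈ I := I.sub_mem hfI (I.mul_mem_left _ hg0)
      have hf'map : MvPolynomial.map φ f' = h := by
        rw [hf'_def, map_sub, _root_.map_mul, MvPolynomial.map_monomial, hφc, hmap]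
        simp
      have hf'0 : f' ≠ 0 := by
        rintro h0
        rw [h0] at hf'map
        exact hh0 (by simpa using hf'map.symm)
      have hvanish : ∀ d, m.toSyn (mDegree m f) ≤ m.toSyn d → f'.coeff d = 0 := by
        intro d hd
        rw [hf'_def, MvPolynomial.coeff_sub, MvPolynomial.coeff_monomial_mul']
        rcases eq_or_lt_of_le hd with heq | hlt
        · have hdeq : d = mDegree m f := m.toSyn.injective heq.symm
          rw [hdeq, if_pos (by rw [← he]; exact le_self_add),
            show mDegree m f - e = mDegree m g from by rw [← he]; ext a; simp,
            show MvPolynomial.coeff (mDegree m f) f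
                = MvPolynomial.coeff (mDegree m g) g * c from hc]
          ring
        · rw [coeff_eq_zero_of_lt m hlt]
          split_ifs with hle
          · have hdd : (d - e) + e = d := tsub_add_cancel_of_le hle
            have : m.toSyn (mDegree m g) < m.toSyn (d - e) := by
              have h2 : m.toSyn e + m.toSyn (mDegree m g) < m.toSyn (d - e) + m.toSyn e := by
                rw [← map_add, ← map_add, he, hdd]; exact hlt
              rw [add_comm (m.toSyn (d - e))] at h2
              exact lt_of_add_lt_add_left h2
            rw [coeff_eq_zero_of_lt m this, mul_zero, sub_self]
          · rw [sub_self]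
      have hlt : m.toSyn (mDegree m f') < s := hs ▸ mDegree_lt_of m hf'0 hvanish
      exact IH _ hlt f' rfl hf'I hf'map
    · -- leading coefficient survives: degrees agree
      have hco : (MvPolynomial.map φ f).coeff (mDegree m f) = φ (mLeadingCoeff m f) :=
        MvPolynomial.coeff_map φ f (mDegree m f)
      have h1 : m.toSyn (mDegree m f) ≤ m.toSyn (mDegree m (MvPolynomial.map φ f)) :=
        le_mDegree m (MvPolynomial.mem_support_iff.mpr (by rw [hco]; exact hφlc))
      have h2 : m.toSyn (mDegree m (MvPolynomial.map φ f)) ≤ m.toSyn (mDegree m f) := by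
        rw [toSyn_mDegree, toSyn_mDegree]
        exact Finset.sup_mono (MvPolynomial.support_map_subset φ f)
      have hdeq : mDegree m (MvPolynomial.map φ f) = mDegree m f :=
        m.toSyn.injective (le_antisymm h2 h1)
      exact ⟨f, hfI, hmap, by rw [← hmap, hdeq]⟩
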